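/- Let β be an algebraic number with |β| > 1 that has a conjugate γ with |γ| = 1, and let A ⊂ ℤ[β] be a finite alphabet with 0 ∈ A and 1 ∈ Fin_β(A). Then for no k ∈ ℕ does (β,A) allow k-block parallel addition; i.e., there is no p-local value-preserving digit-set conversion in base β^k from A_(k) + A_(k) to A_(k), where A_(k) = { Σ_{i=0}^{k−1} a_i β^i : a_i ∈ A }. -/

import Mathlib

noncomputable section

open Pointwise

/-- `ℤ[β]`: the smallest subring of `ℂ` containing `β` (and hence `ℤ`). -/
def Zring (β : ℂ) : Subring ℂ := Subring.closure {β}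

/-- `x` has a finite `(β, A)`-representation `x = ∑_{j=-m}^{n} a_j β^j` with digits in `A`. -/
def FinRep (β : ℂ) (A : Set ℂ) (x : ℂ) : Prop :=
  ∃ (m n : ℕ) (a : ℤ → ℂ), (∀ j, a j ∈ A) ∧
    x = ∑ j ∈ Finset.Icc (-(m : ℤ)) (n : ℤ), a j * β ^ j

/-- A `p`-local digit set conversion in base `β` from `B` to `A`, with memory `r` and
anticipation `t` (`p = r + t + 1`), given by a local rule `Φ`. -/
def IsLocalConv (β : ℂ) (B A : Set ℂ) (r t : ℕ)
    (Φ : (Fin (r + t + 1) → ℂ) → ℂ) : Prop :=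
  (∀ u : Fin (r + t + 1) → ℂ, (∀ i, u i ∈ B) → Φ u ∈ A) ∧
  ∀ w : ℤ → ℂ, (∀ j, w j ∈ B) → (Function.support w).Finite →
    (Function.support (fun j : ℤ => Φ fun i => w (j + (t : ℤ) - ((i : ℕ) : ℤ)))).Finite ∧
    ∑ᶠ j : ℤ, w j * β ^ j =
      ∑ᶠ j : ℤ, (Φ fun i => w (j + (t : ℤ) - ((i : ℕ) : ℤ))) * β ^ j

/-- `(β, A)` allows parallel addition. -/
def AllowsParAdd (β : ℂ) (A : Set ℂ) : Prop :=
  ∃ (r t : ℕ) (Φ : (Fin (r + t + 1) → ℂ) → ℂ), IsLocalConv β (A + A) A r t Φ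

/-- The `k`-block alphabet `A_(k) = { ∑_{i=0}^{k-1} a_i β^i : a_i ∈ A }`. -/
def BlockAlphabet (β : ℂ) (A : Set ℂ) (k : ℕ) : Set ℂ :=
  {x | ∃ a : ℕ → ℂ, (∀ i, a i ∈ A) ∧ x = ∑ i ∈ Finset.range k, a i * β ^ i}

/-- Exponential beats linear. -/
lemma exists_two_pow_gt (D : ℝ) : ∃ s : ℕ, D * (s + 1) < 2 ^ s := by
  obtain ⟨N, hN⟩ := exists_nat_gt D
  refine ⟨2 * N + 6, ?_⟩
  have h2 : (N : ℝ) + 1 ≤ 2 ^ N := by exact_mod_cast (Nat.lt_two_pow_self (n := N))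
  have hpow : (2 : ℝ) ^ (2 * N + 6) = 64 * ((2 : ℝ) ^ N) ^ 2 := by
    rw [two_mul, pow_add, pow_add, ← pow_mul]; norm_num; ring
  have hcast : ((2 * N + 6 : ℕ) : ℝ) + 1 = 2 * (N : ℝ) + 7 := by push_cast; ring
  rw [hpow, hcast]
  have hN0 : (0 : ℝ) ≤ N := Nat.cast_nonneg N
  have h1 : D * (2 * (N : ℝ) + 7) < (N : ℝ) * (2 * (N : ℝ) + 7) := by
    apply mul_lt_mul_of_pos_right hN
    linarith
  nlinarith [sq_nonneg ((2:ℝ) ^ N), sq_nonneg ((2:ℝ) ^ N - (N:ℝ) - 1)]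

set_option maxHeartbeats 1000000 in
open IntermediateField in
theorem stmt19 (β γ : ℂ) (hβ : 1 < ‖β‖) (hβalg : IsAlgebraic ℚ β)
    (hγ : Polynomial.aeval γ (minpoly ℚ β) = 0) (hγmod : ‖γ‖ = 1)
    (A : Set ℂ) (hAfin : A.Finite) (h0 : (0 : ℂ) ∈ A) (hA : A ⊆ (Zring β : Set ℂ))
    (h1 : FinRep β A 1) :
    ∀ k : ℕ, 0 < k → ¬ AllowsParAdd (β ^ k) (BlockAlphabet β A k) := by
  classical
  intro k hk
  rintro ⟨r, t, Φ, hΦmem, hΦconv⟩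
  set δ : ℂ := β ^ k with hδdef
  set Ak : Set ℂ := BlockAlphabet β A k with hAkdef
  -- the embedding ψ : ℚ(β) → ℂ sending β to γ
  have hβint : IsIntegral ℚ β := hβalg.isIntegral
  have hγroot : γ ∈ (minpoly ℚ β).aroots ℂ := by
    rw [Polynomial.mem_aroots]
    exact ⟨minpoly.ne_zero hβint, hγ⟩
  set K : IntermediateField ℚ ℂ := ℚ⟮β⟯ with hKdef
  set ψ : K →ₐ[ℚ] ℂ :=
    (IntermediateField.algHomAdjoinIntegralEquiv ℚ hβint).symm ⟨γ, hγroot⟩ with hψdef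
  have hβK : β ∈ K := IntermediateField.mem_adjoin_simple_self ℚ β
  -- σ : partial extension of ψ to ℂ
  set σ : ℂ → ℂ := fun x => if h : x ∈ K then ψ ⟨x, h⟩ else 0 with hσdef
  have σ_spec : ∀ (x : ℂ) (h : x ∈ K), σ x = ψ ⟨x, h⟩ := by
    intro x h
    simp only [hσdef]
    exact dif_pos h
  have σ_zero : σ 0 = 0 := by
    rw [σ_spec 0 (zero_mem K)]
    have : (⟨0, zero_mem K⟩ : K) = 0 := rfl
    rw [this, map_zero]
  have σ_one : σ 1 = 1 := by
    rw [σ_spec 1 (one_mem K)]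
    have : (⟨1, one_mem K⟩ : K) = 1 := rfl
    rw [this, map_one]
  have σ_add : ∀ x y : ℂ, x ∈ K → y ∈ K → σ (x + y) = σ x + σ y := by
    intro x y hx hy
    rw [σ_spec x hx, σ_spec y hy, σ_spec (x + y) (add_mem hx hy)]
    have : (⟨x + y, add_mem hx hy⟩ : K) = ⟨x, hx⟩ + ⟨y, hy⟩ := rfl
    rw [this, map_add]
  have σ_mul : ∀ x y : ℂ, x ∈ K → y ∈ K → σ (x * y) = σ x * σ y := by
    intro x y hx hy
    rw [σ_spec x hx, σ_spec y hy, σ_spec (x * y) (mul_mem hx hy)]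
    have : (⟨x * y, mul_mem hx hy⟩ : K) = ⟨x, hx⟩ * ⟨y, hy⟩ := rfl
    rw [this, map_mul]
  have σ_β : σ β = γ := by
    rw [σ_spec β hβK]
    have hgen : (⟨β, hβK⟩ : K) = IntermediateField.AdjoinSimple.gen ℚ β := rfl
    rw [hgen]
    exact IntermediateField.algHomAdjoinIntegralEquiv_symm_apply_gen ℚ hβint _
  have σ_pow : ∀ (x : ℂ) (hx : x ∈ K) (n : ℕ), σ (x ^ n) = σ x ^ n := by
    intro x hx n
    induction n with
    | zero => simpa using σ_one
    | succ n ih =>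
      rw [pow_succ, pow_succ, σ_mul _ _ (pow_mem hx n) hx, ih]
  have coeK_zpow : ∀ (x : K) (n : ℤ), ((x ^ n : K) : ℂ) = (x : ℂ) ^ n := by
    intro x n
    cases n with
    | ofNat m => simp [zpow_natCast]
    | negSucc m =>
      rw [zpow_negSucc, zpow_negSucc]
      rw [← SubmonoidClass.coe_pow]
      exact IntermediateField.coe_inv K (x ^ (m + 1))
  have σ_zpow : ∀ (x : ℂ) (hx : x ∈ K) (n : ℤ), σ (x ^ n) = σ x ^ n := by
    intro x hx n
    have hxn : x ^ n ∈ K := zpow_mem hx n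
    rw [σ_spec _ hxn, σ_spec x hx]
    have : (⟨x ^ n, hxn⟩ : K) = (⟨x, hx⟩ : K) ^ n := by
      apply Subtype.ext
      exact (coeK_zpow ⟨x, hx⟩ n).symm
    rw [this, map_zpow₀]
  have σ_sum : ∀ {ι : Type} (s : Finset ι) (f : ι → ℂ), (∀ i ∈ s, f i ∈ K) →
      σ (∑ i ∈ s, f i) = ∑ i ∈ s, σ (f i) := by
    intro ι s f
    classical
    induction s using Finset.induction_on with
    | empty => intro _; simpa using σ_zero
    | insert _ _ hnot ih =>
      intro hmem
      rw [Finset.sum_insert hnot, Finset.sum_insert hnot,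
        σ_add _ _ (hmem _ (Finset.mem_insert_self _ _))
          (sum_mem fun i hi => hmem i (Finset.mem_insert_of_mem hi)),
        ih fun i hi => hmem i (Finset.mem_insert_of_mem hi)]
  have σ_inj : ∀ x : ℂ, x ∈ K → σ x = 0 → x = 0 := by
    intro x hx h
    rw [σ_spec x hx] at h
    have : (⟨x, hx⟩ : K) = 0 := by
      apply RingHom.injective (ψ : K →+* ℂ)
      simpa using h
    exact congrArg Subtype.val this
  -- membership facts
  have memA : ∀ a ∈ A, a ∈ K := by
    intro a ha
    have hsub : Zring β ≤ K.toSubring := by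
      rw [Zring]
      exact Subring.closure_le.mpr (Set.singleton_subset_iff.mpr hβK)
    exact hsub (hA ha)
  have memAk : ∀ x ∈ Ak, x ∈ K := by
    rintro x ⟨a, ha, rfl⟩
    exact sum_mem fun i _ => mul_mem (memA _ (ha i)) (pow_mem hβK i)
  -- bounds
  obtain ⟨C₀, hC₀⟩ := (hAfin.image fun a => ‖σ a‖).bddAbove
  have hC₀A : ∀ a ∈ A, ‖σ a‖ ≤ C₀ := fun a ha =>
    hC₀ (Set.mem_image_of_mem _ ha)
  have hC₀0 : 0 ≤ C₀ := le_trans (by simp [σ_zero]) (hC₀A 0 h0)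
  have hγ0 : ∀ i : ℕ, ‖γ ^ i‖ = 1 := by
    intro i; rw [norm_pow, hγmod, one_pow]
  have hAkbound : ∀ x ∈ Ak, ‖σ x‖ ≤ k * C₀ := by
    rintro x ⟨a, ha, rfl⟩
    rw [σ_sum _ _ fun i _ => mul_mem (memA _ (ha i)) (pow_mem hβK i)]
    calc ‖∑ i ∈ Finset.range k, σ (a i * β ^ i)‖
        ≤ ∑ i ∈ Finset.range k, ‖σ (a i * β ^ i)‖ :=
          norm_sum_le _ _
      _ ≤ ∑ _i ∈ Finset.range k, C₀ := by
          apply Finset.sum_le_sum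
          intro i _
          rw [σ_mul _ _ (memA _ (ha i)) (pow_mem hβK i), norm_mul,
            σ_pow _ hβK, σ_β, hγ0 i, mul_one]
          exact hC₀A _ (ha i)
      _ = k * C₀ := by simp [mul_comm]
  -- the base ζ = σ δ
  have hδK : δ ∈ K := pow_mem hβK k
  set ζ : ℂ := γ ^ k with hζdef
  have σ_δ : σ δ = ζ := by rw [hδdef, σ_pow _ hβK, σ_β]
  have hζabs : ∀ j : ℤ, ‖ζ ^ j‖ = 1 := by
    intro j
    rw [norm_zpow, hζdef, norm_pow, hγmod, one_pow, one_zpow]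
  -- Φ sends the zero window to 0
  have h0Ak : (0 : ℂ) ∈ Ak := ⟨fun _ => 0, fun _ => h0, by simp⟩
  have h0B : (0 : ℂ) ∈ Ak + Ak := by simpa using Set.add_mem_add h0Ak h0Ak
  have Φ0 : Φ (fun _ => 0) = 0 := by
    by_contra hne
    obtain ⟨hfin, -⟩ := hΦconv (fun _ => 0) (fun _ => h0B) (by simp)
    have : (Function.support fun _ : ℤ => Φ fun _ => (0 : ℂ)) = Set.univ :=
      Function.support_const hne
    rw [this] at hfin
    exact Set.infinite_univ hfin
  -- a nonzero digit
  have hex : ∃ x ∈ A, x ≠ 0 := by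
    by_contra hno
    push_neg at hno
    obtain ⟨m, n, a, ha, hsum⟩ := h1
    have : (1 : ℂ) = 0 := by
      rw [hsum]
      apply Finset.sum_eq_zero
      intro j _
      rw [hno _ (ha j), zero_mul]
    exact one_ne_zero this
  obtain ⟨a₀, ha₀A, ha₀⟩ := hex
  have ha₀Ak : a₀ ∈ Ak := by
    refine ⟨fun i => if i = 0 then a₀ else 0, fun i => ?_, ?_⟩
    · by_cases hi0 : i = 0
      · simpa [hi0] using ha₀A
      · simpa [hi0] using h0
    · rw [Finset.sum_eq_single 0]
      · simp
      · intro i _ hi; simp [hi]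
      · intro h; exact absurd (Finset.mem_range.mpr hk) h
  -- main induction: doubling
  have main : ∀ s : ℕ, ∃ w : ℤ → ℂ,
      (∀ j, w j ∈ Ak) ∧
      (∀ j : ℤ, j < -((s * t : ℕ) : ℤ) ∨ ((s * r : ℕ) : ℤ) < j → w j = 0) ∧
      ∑ j ∈ Finset.Icc (-((s * t : ℕ) : ℤ)) ((s * r : ℕ) : ℤ), w j * δ ^ j
        = 2 ^ s * a₀ := by
    intro s
    induction s with
    | zero =>
      refine ⟨fun j => if j = 0 then a₀ else 0, fun j => ?_, fun j hj => ?_, ?_⟩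
      · by_cases hj0 : j = 0
        · simpa [hj0] using ha₀Ak
        · simpa [hj0] using h0Ak
      · have : j ≠ 0 := by
          simp only [Nat.zero_mul, Nat.cast_zero, neg_zero] at hj
          omega
        simp [this]
      · simp
    | succ s ih =>
      obtain ⟨w, hwmem, hwvan, hwsum⟩ := ih
      set u : ℤ → ℂ := fun j => w j + w j with hudef
      have humem : ∀ j, u j ∈ Ak + Ak := fun j => Set.add_mem_add (hwmem j) (hwmem j)
      have husupp : Function.support u ⊆
          ↑(Finset.Icc (-((s * t : ℕ) : ℤ)) ((s * r : ℕ) : ℤ)) := by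
        intro j hj
        simp only [Finset.coe_Icc, Set.mem_Icc]
        by_contra hcon
        push_neg at hcon
        apply hj
        have hw0 : w j = 0 := by
          apply hwvan
          by_cases h : -((s * t : ℕ) : ℤ) ≤ j
          · exact Or.inr (hcon h)
          · exact Or.inl (by omega)
        show u j = 0
        rw [hudef]
        simp [hw0]
      have hufin : (Function.support u).Finite :=
        Set.Finite.subset (Finset.finite_toSet _) husupp
      obtain ⟨hvfin, hval⟩ := hΦconv u humem hufin
      set v : ℤ → ℂ := fun j : ℤ => Φ fun i => u (j + (t : ℤ) - ((i : ℕ) : ℤ)) with hvdef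
      refine ⟨v, fun j => hΦmem _ fun i => humem _, ?_, ?_⟩
      · -- vanishing of v outside the widened window
        intro j hj
        have hwin : ∀ i : Fin (r + t + 1), u (j + (t : ℤ) - ((i : ℕ) : ℤ)) = 0 := by
          intro i
          have hi : ((i : ℕ) : ℤ) ≤ (r : ℤ) + t := by
            have := i.isLt
            omega
          have hi0 : (0 : ℤ) ≤ ((i : ℕ) : ℤ) := Int.natCast_nonneg _
          have hcast1 : (((s + 1) * t : ℕ) : ℤ) = (s * t : ℕ) + t := by push_cast; ring
          have hcast2 : (((s + 1) * r : ℕ) : ℤ) = (s * r : ℕ) + r := by push_cast; ring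
          have hw : w (j + (t : ℤ) - ((i : ℕ) : ℤ)) = 0 := by
            apply hwvan
            rcases hj with hj | hj
            · left; rw [hcast1] at hj; omega
            · right; rw [hcast2] at hj; omega
          show u _ = 0
          rw [hudef]; simp [hw]
        show Φ (fun i => u (j + (t : ℤ) - ((i : ℕ) : ℤ))) = 0
        have : (fun i : Fin (r + t + 1) => u (j + (t : ℤ) - ((i : ℕ) : ℤ)))
            = fun _ => (0 : ℂ) := funext hwin
        rw [this]
        exact Φ0
      · -- value
        have hsupp_uδ : Function.support (fun j => u j * δ ^ j) ⊆
            ↑(Finset.Icc (-((s * t : ℕ) : ℤ)) ((s * r : ℕ) : ℤ)) := by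
          intro j hj
          apply husupp
          intro h
          apply hj
          show u j * δ ^ j = 0
          rw [h, zero_mul]
        have hu_fin : ∑ᶠ j : ℤ, u j * δ ^ j
            = ∑ j ∈ Finset.Icc (-((s * t : ℕ) : ℤ)) ((s * r : ℕ) : ℤ), u j * δ ^ j :=
          finsum_eq_sum_of_support_subset _ hsupp_uδ
        have hvvan : ∀ j : ℤ,
            j < -(((s+1) * t : ℕ) : ℤ) ∨ (((s+1) * r : ℕ) : ℤ) < j → v j = 0 := by
          intro j hj
          have hwin : ∀ i : Fin (r + t + 1), u (j + (t : ℤ) - ((i : ℕ) : ℤ)) = 0 := by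
            intro i
            have hi : ((i : ℕ) : ℤ) ≤ (r : ℤ) + t := by
              have := i.isLt
              omega
            have hi0 : (0 : ℤ) ≤ ((i : ℕ) : ℤ) := Int.natCast_nonneg _
            have hcast1 : (((s + 1) * t : ℕ) : ℤ) = (s * t : ℕ) + t := by push_cast; ring
            have hcast2 : (((s + 1) * r : ℕ) : ℤ) = (s * r : ℕ) + r := by push_cast; ring
            have hw : w (j + (t : ℤ) - ((i : ℕ) : ℤ)) = 0 := by
              apply hwvan
              rcases hj with hj | hj
              · left; rw [hcast1] at hj; omega
              · right; rw [hcast2] at hj; omega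
            show u _ = 0
            rw [hudef]; simp [hw]
          show Φ (fun i => u (j + (t : ℤ) - ((i : ℕ) : ℤ))) = 0
          have : (fun i : Fin (r + t + 1) => u (j + (t : ℤ) - ((i : ℕ) : ℤ)))
              = fun _ => (0 : ℂ) := funext hwin
          rw [this]
          exact Φ0
        have hsupp_vδ : Function.support (fun j => v j * δ ^ j) ⊆
            ↑(Finset.Icc (-(((s+1) * t : ℕ) : ℤ)) (((s+1) * r : ℕ) : ℤ)) := by
          intro j hj
          simp only [Finset.coe_Icc, Set.mem_Icc]
          by_contra hcon
          push_neg at hcon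
          apply hj
          show v j * δ ^ j = 0
          have : v j = 0 := by
            apply hvvan
            by_cases h : -(((s+1) * t : ℕ) : ℤ) ≤ j
            · exact Or.inr (hcon h)
            · exact Or.inl (by omega)
          rw [this, zero_mul]
        have hv_fin : ∑ᶠ j : ℤ, v j * δ ^ j
            = ∑ j ∈ Finset.Icc (-(((s+1) * t : ℕ) : ℤ)) (((s+1) * r : ℕ) : ℤ),
                v j * δ ^ j :=
          finsum_eq_sum_of_support_subset _ hsupp_vδ
        have hu_val : ∑ᶠ j : ℤ, u j * δ ^ j = 2 ^ (s + 1) * a₀ := by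
          rw [hu_fin]
          have : ∀ j ∈ Finset.Icc (-((s * t : ℕ) : ℤ)) ((s * r : ℕ) : ℤ),
              u j * δ ^ j = w j * δ ^ j + w j * δ ^ j := by
            intro j _
            rw [hudef]
            ring
          rw [Finset.sum_congr rfl this, Finset.sum_add_distrib, hwsum]
          ring
        rw [← hv_fin, ← hval, hu_val]
  -- final contradiction
  have hσa₀ : σ a₀ ≠ 0 := fun h => ha₀ (σ_inj _ (memA _ ha₀A) h)
  have hε : 0 < ‖σ a₀‖ := by
    rw [norm_pos_iff]
    exact hσa₀
  set ε : ℝ := ‖σ a₀‖ with hεdef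
  obtain ⟨s, hs⟩ := exists_two_pow_gt (((r : ℝ) + t + 1) * ((k : ℝ) * C₀) / ε)
  obtain ⟨w, hwmem, hwvan, hwsum⟩ := main s
  -- apply σ to the value equation
  have hterm : ∀ j ∈ Finset.Icc (-((s * t : ℕ) : ℤ)) ((s * r : ℕ) : ℤ),
      w j * δ ^ j ∈ K := fun j _ => mul_mem (memAk _ (hwmem j)) (zpow_mem hδK j)
  have hσsum : σ (∑ j ∈ Finset.Icc (-((s * t : ℕ) : ℤ)) ((s * r : ℕ) : ℤ),
      w j * δ ^ j) = ∑ j ∈ Finset.Icc (-((s * t : ℕ) : ℤ)) ((s * r : ℕ) : ℤ),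
      σ (w j) * ζ ^ j := by
    rw [σ_sum _ _ hterm]
    apply Finset.sum_congr rfl
    intro j _
    rw [σ_mul _ _ (memAk _ (hwmem j)) (zpow_mem hδK j), σ_zpow _ hδK, σ_δ]
  have hσrhs : σ ((2 : ℂ) ^ s * a₀) = 2 ^ s * σ a₀ := by
    have h2K : (2 : ℂ) ∈ K := by
      have : (2 : ℂ) = 1 + 1 := by norm_num
      rw [this]
      exact add_mem (one_mem K) (one_mem K)
    have σ_two : σ 2 = 2 := by
      have h12 : (2 : ℂ) = 1 + 1 := by norm_num
      rw [h12, σ_add _ _ (one_mem K) (one_mem K), σ_one]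
    rw [σ_mul _ _ (pow_mem h2K s) (memA _ ha₀A), σ_pow _ h2K, σ_two]
  have heq : (2 : ℂ) ^ s * σ a₀
      = ∑ j ∈ Finset.Icc (-((s * t : ℕ) : ℤ)) ((s * r : ℕ) : ℤ), σ (w j) * ζ ^ j := by
    rw [← hσrhs, ← hσsum, hwsum]
  -- bound the right-hand side
  have hbound : ‖(2 : ℂ) ^ s * σ a₀‖
      ≤ ((s * t : ℕ) + (s * r : ℕ) + 1) * ((k : ℝ) * C₀) := by
    rw [heq]
    calc ‖∑ j ∈ Finset.Icc (-((s * t : ℕ) : ℤ)) ((s * r : ℕ) : ℤ),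
          σ (w j) * ζ ^ j‖
        ≤ ∑ j ∈ Finset.Icc (-((s * t : ℕ) : ℤ)) ((s * r : ℕ) : ℤ),
            ‖σ (w j) * ζ ^ j‖ := norm_sum_le _ _
      _ ≤ ∑ _j ∈ Finset.Icc (-((s * t : ℕ) : ℤ)) ((s * r : ℕ) : ℤ), (k : ℝ) * C₀ := by
          apply Finset.sum_le_sum
          intro j _
          rw [norm_mul, hζabs j, mul_one]
          exact hAkbound _ (hwmem j)
      _ = ((Finset.Icc (-((s * t : ℕ) : ℤ)) ((s * r : ℕ) : ℤ)).card : ℝ)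
            * ((k : ℝ) * C₀) := by rw [Finset.sum_const, nsmul_eq_mul]
      _ = ((s * t : ℕ) + (s * r : ℕ) + 1) * ((k : ℝ) * C₀) := by
          congr 1
          rw [Int.card_Icc]
          have : ((s * r : ℕ) : ℤ) + 1 - (-((s * t : ℕ) : ℤ))
              = ((s * r + s * t + 1 : ℕ) : ℤ) := by push_cast; ring
          rw [this, Int.toNat_natCast]
          push_cast
          ring
  have habs : ‖(2 : ℂ) ^ s * σ a₀‖ = 2 ^ s * ε := by
    rw [norm_mul, norm_pow, Complex.norm_two, hεdef]
  rw [habs] at hbound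
  -- derive contradiction
  have hkC₀ : 0 ≤ (k : ℝ) * C₀ := mul_nonneg (Nat.cast_nonneg k) hC₀0
  have hlin : ((s * t : ℕ) + (s * r : ℕ) + 1 : ℝ) ≤ ((r : ℝ) + t + 1) * (s + 1) := by
    push_cast
    nlinarith [Nat.cast_nonneg (α := ℝ) s, Nat.cast_nonneg (α := ℝ) r,
      Nat.cast_nonneg (α := ℝ) t]
  have hgrow : ((r : ℝ) + t + 1) * ((k : ℝ) * C₀) * (s + 1) < 2 ^ s * ε := by
    rw [div_mul_eq_mul_div, div_lt_iff₀ hε] at hs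
    calc ((r : ℝ) + t + 1) * ((k : ℝ) * C₀) * (s + 1)
        = ((r : ℝ) + t + 1) * ((k : ℝ) * C₀) * ((s : ℝ) + 1) := by norm_num
      _ < 2 ^ s * ε := by linarith [hs]
  have : (2 : ℝ) ^ s * ε ≤ ((r : ℝ) + t + 1) * ((k : ℝ) * C₀) * (s + 1) := by
    calc (2 : ℝ) ^ s * ε ≤ ((s * t : ℕ) + (s * r : ℕ) + 1) * ((k : ℝ) * C₀) := hbound
      _ ≤ (((r : ℝ) + t + 1) * (s + 1)) * ((k : ℝ) * C₀) :=
          mul_le_mul_of_nonneg_right hlin hkC₀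
      _ = ((r : ℝ) + t + 1) * ((k : ℝ) * C₀) * (s + 1) := by ring
  linarith
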